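/- Let n ≥ 4 be an even integer and set a₃ = [−(1+4n+n²) + n(n+1)cos(π/(n−1)) + (n+1)cos(nπ/(n−1))] / [n(n+1)cos(π/(n−1)) + (n+1)cos(nπ/(n−1)) − (n+1)²]. Then for every real a with a₃ < a < 2, the open disk {w ∈ ℂ : |w − a| < 2 − a} is contained in Ω_{nL} = φ_{nL}(𝔻). -/

import Mathlib

open Complex Metric Set

/-- The function φ_{nL}(z) = 1 + n z/(n+1) + z^n/(n+1). -/
noncomputable def phinL (n : ℕ) (z : ℂ) : ℂ :=
  1 + (n : ℂ) * z / ((n : ℂ) + 1) + z ^ n / ((n : ℂ) + 1)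

/-- Ω_{nL} = φ_{nL}(𝔻), the image of the open unit disk. -/
def OmeganL (n : ℕ) : Set ℂ := phinL n '' ball (0 : ℂ) 1

/-- f is analytic on the unit disk with f(0) = 0 and f'(0) = 1. -/
def IsNormalizedAnalytic (f : ℂ → ℂ) : Prop :=
  AnalyticOnNhd ℂ f (ball (0 : ℂ) 1) ∧ f 0 = 0 ∧ deriv f 0 = 1

/-- p is subordinate to ψ on the unit disk. -/
def Subord (p ψ : ℂ → ℂ) : Prop :=
  ∃ ω : ℂ → ℂ, AnalyticOnNhd ℂ ω (ball (0 : ℂ) 1) ∧ ω 0 = 0 ∧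
    (∀ z ∈ ball (0 : ℂ) 1, ω z ∈ ball (0 : ℂ) 1) ∧
    (∀ z ∈ ball (0 : ℂ) 1, p z = ψ (ω z))

/-- Membership in the class S*_{nL}. -/
def MemSnL (n : ℕ) (f : ℂ → ℂ) : Prop :=
  IsNormalizedAnalytic f ∧ (∀ z ∈ ball (0 : ℂ) 1, z ≠ 0 → f z ≠ 0) ∧
  Subord (fun z => if z = 0 then 1 else z * deriv f z / f z) (phinL n)

open Real Filter Topology

lemma abs_sin_nat_mul_le' (k : ℕ) (x : ℝ) : |Real.sin (k * x)| ≤ k * |Real.sin x| := by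
  induction k with
  | zero => simp
  | succ k ih =>
    have h : ((k:ℝ)+1) * x = k*x + x := by ring
    push_cast
    rw [h, Real.sin_add]
    calc |Real.sin (k*x) * Real.cos x + Real.cos (k*x) * Real.sin x|
        ≤ |Real.sin (k*x) * Real.cos x| + |Real.cos (k*x) * Real.sin x| := abs_add_le _ _
      _ ≤ |Real.sin (k*x)| * 1 + 1 * |Real.sin x| := by
          rw [abs_mul, abs_mul]
          gcongr <;> first | exact Real.abs_cos_le_one _ | exact abs_nonneg _
      _ ≤ (k:ℝ) * |Real.sin x| + 1 * |Real.sin x| := by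
          have := ih
          nlinarith [abs_nonneg (Real.sin x)]
      _ = ((k:ℝ)+1) * |Real.sin x| := by ring

lemma sin_sq_nat_mul_le (k : ℕ) (x : ℝ) : Real.sin (k * x)^2 ≤ (k:ℝ)^2 * Real.sin x ^2 := by
  have h := abs_sin_nat_mul_le' k x
  have h2 : |Real.sin (k*x)|^2 ≤ ((k:ℝ) * |Real.sin x|)^2 := by
    have hk : (0:ℝ) ≤ k * |Real.sin x| := by positivity
    nlinarith [abs_nonneg (Real.sin (k*x))]
  calc Real.sin (k*x)^2 = |Real.sin (k*x)|^2 := (_root_.sq_abs _).symm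
    _ ≤ ((k:ℝ) * |Real.sin x|)^2 := h2
    _ = (k:ℝ)^2 * Real.sin x^2 := by rw [mul_pow, _root_.sq_abs]

set_option maxHeartbeats 1000000 in
lemma key_trig (m : ℕ) (hm : 1 ≤ m) (t : ℝ) :
    (1 + (m:ℝ) * (1 - Real.cos (π / m)) / 2) * (1 - Real.cos (m * t)) ≤
      ((m:ℝ)+1) * (1 - Real.cos t) + (1 - Real.cos (((m:ℝ)+1) * t)) := by
  set K : ℝ := 1 + (m:ℝ) * (1 - Real.cos (π / m)) / 2 with hK
  set n : ℕ := m + 1 with hn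
  have hmR : (0:ℝ) < m := by exact_mod_cast hm
  have hnR : ((n:ℝ)) = (m:ℝ) + 1 := by push_cast [hn]; ring
  -- the function g
  set g : ℝ → ℝ := fun y => (n:ℝ) * (1 - Real.cos y) + (1 - Real.cos (n * y))
      - K * (1 - Real.cos (m * y)) with hg
  have hcont : Continuous g := by fun_prop
  have hderiv : ∀ y : ℝ, HasDerivAt g
      ((n:ℝ) * Real.sin y + Real.sin ((n:ℝ)*y) * n - K * (Real.sin ((m:ℝ)*y) * m)) y := by
    intro y
    have h1 : HasDerivAt (fun y : ℝ => Real.cos y) (-Real.sin y) y := Real.hasDerivAt_cos y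
    have h2 : HasDerivAt (fun y : ℝ => Real.cos ((n:ℝ)*y)) (-Real.sin ((n:ℝ)*y) * n) y := by
      simpa [Function.comp_def] using (Real.hasDerivAt_cos ((n:ℝ)*y)).comp y ((hasDerivAt_id y).const_mul (n:ℝ))
    have h3 : HasDerivAt (fun y : ℝ => Real.cos ((m:ℝ)*y)) (-Real.sin ((m:ℝ)*y) * m) y := by
      simpa [Function.comp_def] using (Real.hasDerivAt_cos ((m:ℝ)*y)).comp y ((hasDerivAt_id y).const_mul (m:ℝ))
    have := (((h1.const_sub 1).const_mul (n:ℝ)).add (h2.const_sub 1)).sub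
      ((h3.const_sub 1).const_mul K)
    convert this using 1
    · rfl
    · rfl
    · rfl
    ring
  -- reduce to [0, 2π]
  suffices H : ∀ y ∈ Icc 0 (2*π), 0 ≤ g y by
    have h2pi : (0:ℝ) < 2*π := by positivity
    set k : ℤ := ⌊t / (2*π)⌋ with hk
    set y : ℝ := t - k * (2*π) with hy
    have hy0 : 0 ≤ y := Int.sub_floor_div_mul_nonneg t h2pi
    have hy1 : y < 2*π := Int.sub_floor_div_mul_lt t h2pi
    have hcos : ∀ j : ℕ, Real.cos ((j:ℝ) * t) = Real.cos ((j:ℝ) * y) := by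
      intro j
      have : (j:ℝ) * y = (j:ℝ)*t - (j*k : ℤ) * (2*π) := by push_cast [hy]; ring
      rw [this, Real.cos_sub_int_mul_two_pi]
    have hcos1 : Real.cos t = Real.cos y := by
      have := hcos 1; simpa using this
    have h : 0 ≤ (n:ℝ) * (1 - Real.cos y) + (1 - Real.cos (n * y))
        - K * (1 - Real.cos (m * y)) := H y ⟨hy0, le_of_lt hy1⟩
    rw [← hnR]
    calc K * (1 - Real.cos ((m:ℝ) * t)) = K * (1 - Real.cos ((m:ℝ)*y)) := by rw [hcos m]
      _ ≤ ((n:ℝ)) * (1 - Real.cos y) + (1 - Real.cos (((n:ℝ))*y)) := by linarith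
      _ = ((n:ℝ)) * (1 - Real.cos t) + (1 - Real.cos (((n:ℝ))*t)) := by
          rw [hcos1, hcos n]
  intro y hy
  obtain ⟨y₀, hy₀, hmin⟩ := (isCompact_Icc : IsCompact (Icc (0:ℝ) (2*π))).exists_isMinOn
    (nonempty_Icc.mpr (by positivity)) hcont.continuousOn
  have hmin' : g y₀ ≤ g y := hmin hy
  have hg0 : g 0 = 0 := by simp [hg]
  have hg2pi : g (2*π) = 0 := by
    have c1 : Real.cos (2*π) = 1 := Real.cos_two_pi
    have c2 : Real.cos ((n:ℝ) * (2*π)) = 1 := Real.cos_nat_mul_two_pi n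
    have c3 : Real.cos ((m:ℝ) * (2*π)) = 1 := Real.cos_nat_mul_two_pi m
    simp [hg, c1, c2, c3]
  suffices h0 : 0 ≤ g y₀ by linarith
  rcases eq_or_lt_of_le hy₀.1 with h1 | h1
  · rw [← h1]; rw [hg0]
  rcases eq_or_lt_of_le hy₀.2 with h2 | h2
  · rw [h2]; rw [hg2pi]
  have hloc : IsLocalMin g y₀ := hmin.isLocalMin (Icc_mem_nhds h1 h2)
  have hd0 : (n:ℝ) * Real.sin y₀ + Real.sin ((n:ℝ)*y₀) * n - K * (Real.sin ((m:ℝ)*y₀) * m) = 0 :=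
    hloc.hasDerivAt_eq_zero (hderiv y₀)
  have hgy : g y₀ = (n:ℝ) * (1 - Real.cos y₀) + (1 - Real.cos ((n:ℝ) * y₀))
      - K * (1 - Real.cos ((m:ℝ) * y₀)) := rfl
  rw [hgy]
  by_cases hcm : Real.cos ((m:ℝ) * (y₀/2)) = 0
  · -- half-angle of m*y₀ vanishes: y₀ = (2k+1)π/m
    obtain ⟨k, hk2⟩ := Real.cos_eq_zero_iff.mp hcm
    have hmy : (m:ℝ) * y₀ = π + (k:ℝ) * (2*π) := by
      have : (m:ℝ) * (y₀/2) = (2*(k:ℝ)+1) * π / 2 := by exact_mod_cast hk2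
      linarith
    have hcosm : Real.cos ((m:ℝ)*y₀) = -1 := by
      rw [hmy, Real.cos_add_int_mul_two_pi, Real.cos_pi]
    have hsinm : Real.sin ((m:ℝ)*y₀) = 0 := by
      rw [hmy, Real.sin_add_int_mul_two_pi, Real.sin_pi]
    have hcosn : Real.cos ((n:ℝ)*y₀) = - Real.cos y₀ := by
      have harg : (n:ℝ)*y₀ = (m:ℝ)*y₀ + y₀ := by rw [hnR]; ring
      rw [harg, Real.cos_add, hcosm, hsinm]; ring
    have hk0 : (0:ℤ) ≤ k := by
      by_contra hneg
      push_neg at hneg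
      have hkR : (k:ℝ) ≤ -1 := by
        have hk1 : k ≤ -1 := by omega
        exact_mod_cast hk1
      have hpos : 0 < (m:ℝ) * y₀ := mul_pos hmR h1
      have hkp : (k:ℝ) * (2*π) ≤ (-1) * (2*π) :=
        mul_le_mul_of_nonneg_right hkR (by positivity)
      linarith [Real.pi_pos]
    have hkm : (k:ℤ) ≤ (m:ℤ) - 1 := by
      by_contra hbig
      push_neg at hbig
      have hkR : ((m:ℝ)) ≤ (k:ℝ) := by
        have hk1 : (m:ℤ) ≤ k := by omega
        exact_mod_cast hk1
      have hlt : (m:ℝ) * y₀ < (m:ℝ) * (2*π) := mul_lt_mul_of_pos_left h2 hmR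
      have hkp : ((m:ℝ)) * (2*π) ≤ (k:ℝ) * (2*π) :=
        mul_le_mul_of_nonneg_right hkR (by positivity)
      linarith [Real.pi_pos]
    have hk0R : (0:ℝ) ≤ (k:ℝ) := by exact_mod_cast hk0
    have hkmR : (k:ℝ) ≤ (m:ℝ) - 1 := by exact_mod_cast hkm
    have hpim : 0 < π / m := by positivity
    have hcy : Real.cos y₀ ≤ Real.cos (π/m) := by
      have hylb : π/m ≤ y₀ := by
        rw [div_le_iff₀ hmR]
        nlinarith [Real.pi_pos]
      by_cases hle : y₀ ≤ π
      · exact Real.cos_le_cos_of_nonneg_of_le_pi (le_of_lt hpim) hle hylb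
      · push_neg at hle
        have hyub : y₀ ≤ 2*π - π/m := by
          rw [← sub_nonneg]
          have hexp : (m:ℝ) * (2*π - π/m - y₀) = 2*π*m - π - m*y₀ := by
            field_simp
          have hkp2 : (k:ℝ)*(2*π) ≤ ((m:ℝ)-1)*(2*π) :=
            mul_le_mul_of_nonneg_right hkmR (by positivity)
          nlinarith [Real.pi_pos]
        have : Real.cos y₀ = Real.cos (2*π - y₀) := (Real.cos_two_pi_sub y₀).symm
        rw [this]
        exact Real.cos_le_cos_of_nonneg_of_le_pi (le_of_lt hpim) (by linarith) (by linarith)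
    rw [hcosm, hcosn, hK, hnR]
    nlinarith [hcy, hmR]
  · -- main case: critical point with cos(m y₀ / 2) ≠ 0
    set u : ℝ := y₀ / 2 with hu
    set s1 : ℝ := Real.sin u with hs1
    set c1 : ℝ := Real.cos u with hc1
    set sm : ℝ := Real.sin ((m:ℝ)*u) with hsm
    set cm : ℝ := Real.cos ((m:ℝ)*u) with hcmdef
    set sn : ℝ := Real.sin ((n:ℝ)*u) with hsn
    set cn : ℝ := Real.cos ((n:ℝ)*u) with hcn
    have p1 : s1^2 + c1^2 = 1 := Real.sin_sq_add_cos_sq u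
    have pm : sm^2 + cm^2 = 1 := Real.sin_sq_add_cos_sq _
    have e1 : Real.sin y₀ = 2*s1*c1 := by
      rw [show y₀ = 2*u by rw [hu]; ring, Real.sin_two_mul]
    have e2 : Real.cos y₀ = 1 - 2*s1^2 := by
      rw [show y₀ = 2*u by rw [hu]; ring, Real.cos_two_mul']; linarith
    have e3 : Real.sin ((m:ℝ)*y₀) = 2*sm*cm := by
      rw [show (m:ℝ)*y₀ = 2*((m:ℝ)*u) by rw [hu]; ring, Real.sin_two_mul]
    have e4 : Real.cos ((m:ℝ)*y₀) = 1 - 2*sm^2 := by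
      rw [show (m:ℝ)*y₀ = 2*((m:ℝ)*u) by rw [hu]; ring, Real.cos_two_mul']; linarith
    have e5 : Real.sin ((n:ℝ)*y₀) = 2*sn*cn := by
      rw [show (n:ℝ)*y₀ = 2*((n:ℝ)*u) by rw [hu]; ring, Real.sin_two_mul]
    have e6 : Real.cos ((n:ℝ)*y₀) = 1 - 2*sn^2 := by
      rw [show (n:ℝ)*y₀ = 2*((n:ℝ)*u) by rw [hu]; ring, Real.cos_two_mul']
      have := Real.sin_sq_add_cos_sq ((n:ℝ)*u); linarith
    have e7 : sn = sm*c1 + cm*s1 := by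
      rw [hsn, show (n:ℝ)*u = (m:ℝ)*u + u by rw [hnR]; ring, Real.sin_add]
    have e8 : cn = cm*c1 - sm*s1 := by
      rw [hcn, show (n:ℝ)*u = (m:ℝ)*u + u by rw [hnR]; ring, Real.cos_add]
    have habs : sn^2 ≤ (n:ℝ)^2 * s1^2 := by
      have := sin_sq_nat_mul_le n u
      rw [hsn, hs1]; exact this
    have hmn : (m:ℝ) = (n:ℝ) - 1 := by rw [hnR]; ring
    have hd0' : (n:ℝ)*(2*s1*c1) + (2*sn*cn)*(n:ℝ) - K*((2*sm*cm)*(m:ℝ)) = 0 := by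
      rw [← e1, ← e3, ← e5]; exact hd0
    rw [e7, e8] at hd0'
    have hW : K * (m:ℝ) * sm = (n:ℝ) * (2*s1*c1*cm + sm*(c1^2 - s1^2)) := by
      apply mul_right_cancel₀ hcm
      linear_combination (-(1:ℝ)/2) * hd0' - ((n:ℝ)*s1*c1) * pm
    have hKsm : K * sm^2 * (m:ℝ) = (n:ℝ) * (2*s1*c1*cm + sm*(c1^2 - s1^2)) * sm := by
      linear_combination sm * hW
    rw [e2, e4, e6, e7]
    have hid : (m:ℝ) * ((n:ℝ)*(1-(1-2*s1^2)) + (1-(1-2*(sm*c1+cm*s1)^2))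
        - K*(1-(1-2*sm^2))) = 2*((n:ℝ)^2*s1^2 - (sm*c1+cm*s1)^2) := by
      linear_combination (-2:ℝ)*hKsm + (2*(n:ℝ)*s1^2)*pm
        + (2*(n:ℝ)*s1^2 + 2*(sm*c1+cm*s1)^2)*hmn
    rw [e7] at habs
    nlinarith [habs, hid, hmR]

set_option maxHeartbeats 1000000 in
lemma boundary (n : ℕ) (hn : 4 ≤ n) (a : ℝ) (ha2 : a < 2) (ha1 : 1 < a)
    (hb : (n:ℝ) ≤ (a - 1) * ((n:ℝ)+1) *
      (1 + ((n:ℝ)-1) * (1 - Real.cos (π / ((n:ℝ)-1))) / 2))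
    (z : ℂ) (hz : ‖z‖ = 1) : 2 - a ≤ ‖phinL n z - a‖ := by
  have hn1 : 1 ≤ n := by omega
  have hnR4 : (4:ℝ) ≤ (n:ℝ) := by exact_mod_cast hn
  set m : ℕ := n - 1 with hmdef
  have hm1 : 1 ≤ m := by omega
  have hmn : (m:ℝ) = (n:ℝ) - 1 := by
    rw [hmdef]; push_cast [Nat.cast_sub hn1]; ring
  obtain ⟨t, rfl⟩ := (Complex.norm_eq_one_iff z).mp hz
  have hnC : ((n:ℂ)+1) ≠ 0 := Nat.cast_add_one_ne_zero n
  have hzn : (Complex.exp (↑t*Complex.I))^n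
      = Complex.exp ((((n:ℝ)*t : ℝ) : ℂ)*Complex.I) := by
    rw [← Complex.exp_nat_mul]
    congr 1
    push_cast
    ring
  -- the rescaled quantity E
  have hE : ((n:ℂ)+1) * (phinL n (Complex.exp (↑t*Complex.I)) - (a:ℂ))
      = ((((n:ℝ)+1)*(1-a) : ℝ) : ℂ) + (n:ℂ) * Complex.exp (↑t*Complex.I)
        + Complex.exp ((((n:ℝ)*t : ℝ) : ℂ)*Complex.I) := by
    rw [← hzn]
    unfold phinL
    push_cast
    field_simp
    ring
  set E : ℂ := ((((n:ℝ)+1)*(1-a) : ℝ) : ℂ) + (n:ℂ) * Complex.exp (↑t*Complex.I)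
        + Complex.exp ((((n:ℝ)*t : ℝ) : ℂ)*Complex.I) with hEdef
  have hre : E.re = ((n:ℝ)+1)*(1-a) + (n:ℝ)*Real.cos t + Real.cos ((n:ℝ)*t) := by
    rw [hEdef]
    simp only [Complex.add_re, Complex.mul_re, Complex.ofReal_re, Complex.ofReal_im,
      Complex.natCast_re, Complex.natCast_im, Complex.exp_ofReal_mul_I_re,
      Complex.exp_ofReal_mul_I_im]
    ring
  have him : E.im = (n:ℝ)*Real.sin t + Real.sin ((n:ℝ)*t) := by
    rw [hEdef]
    simp only [Complex.add_im, Complex.mul_im, Complex.ofReal_re, Complex.ofReal_im,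
      Complex.natCast_re, Complex.natCast_im, Complex.exp_ofReal_mul_I_re,
      Complex.exp_ofReal_mul_I_im]
    ring
  -- trig facts
  set ct := Real.cos t with hct
  set st := Real.sin t with hst
  set cnt := Real.cos ((n:ℝ)*t) with hcnt
  set snt := Real.sin ((n:ℝ)*t) with hsnt
  have pyt : ct^2 + st^2 = 1 := by
    have := Real.sin_sq_add_cos_sq t; rw [hct, hst]; linarith
  have pynt : cnt^2 + snt^2 = 1 := by
    have := Real.sin_sq_add_cos_sq ((n:ℝ)*t); linarith
  have hcmt : Real.cos ((m:ℝ)*t) = cnt*ct + snt*st := by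
    rw [show (m:ℝ)*t = (n:ℝ)*t - t by rw [hmn]; ring, Real.cos_sub]
  -- the key inequality
  rw [← hmn] at hb
  have key := key_trig m hm1 t
  rw [show ((m:ℝ)+1) = (n:ℝ) by rw [hmn]; ring] at key
  have hK0 : (0:ℝ) < 1 + ((m:ℝ)) * (1 - Real.cos (π / ((m:ℝ)))) / 2 := by
    nlinarith [Real.cos_le_one (π / ((m:ℝ)))]
  have hcm0 : 0 ≤ 1 - Real.cos ((m:ℝ)*t) := by
    nlinarith [Real.cos_le_one ((m:ℝ)*t)]
  have ha1' : 0 ≤ (a-1)*((n:ℝ)+1) := by nlinarith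
  have step1 : (n:ℝ)*(1 - Real.cos ((m:ℝ)*t))
      ≤ (a-1)*((n:ℝ)+1)*((n:ℝ)*(1-ct)+(1-cnt)) := by
    calc (n:ℝ)*(1 - Real.cos ((m:ℝ)*t))
        ≤ ((a - 1) * ((n:ℝ)+1) * (1 + ((m:ℝ)) * (1 - Real.cos (π / ((m:ℝ)))) / 2))
          * (1 - Real.cos ((m:ℝ)*t)) := mul_le_mul_of_nonneg_right hb hcm0
      _ ≤ (a-1)*((n:ℝ)+1)*((n:ℝ)*(1-ct)+(1-cnt)) := by
          have h2 := mul_le_mul_of_nonneg_left key ha1'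
          calc ((a - 1) * ((n:ℝ)+1) * (1 + ((m:ℝ)) * (1 - Real.cos (π / ((m:ℝ)))) / 2))
              * (1 - Real.cos ((m:ℝ)*t))
              = (a-1)*((n:ℝ)+1) * ((1 + ((m:ℝ)) * (1 - Real.cos (π / ((m:ℝ)))) / 2)
                * (1 - Real.cos ((m:ℝ)*t))) := by ring
            _ ≤ (a-1)*((n:ℝ)+1)*((n:ℝ)*(1-ct)+(1-cnt)) := h2
  -- norm computation
  have habs : ‖E‖ = ((n:ℝ)+1) * ‖phinL n (Complex.exp (↑t*Complex.I)) - a‖ := by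
    rw [← hE, norm_mul]
    congr 1
    have : ((n:ℂ)+1) = (((n+1:ℕ):ℂ)) := by push_cast; ring
    rw [this, Complex.norm_natCast]
    push_cast; ring
  have hEsq : ((2-a)*((n:ℝ)+1))^2 ≤ E.re^2 + E.im^2 := by
    rw [hre, him]
    have hident : (((n:ℝ)+1)*(1-a) + (n:ℝ)*ct + cnt)^2 + ((n:ℝ)*st + snt)^2
        - ((2-a)*((n:ℝ)+1))^2
        = 2*((a-1)*((n:ℝ)+1)*((n:ℝ)*(1-ct)+(1-cnt))
            - (n:ℝ)*(1 - Real.cos ((m:ℝ)*t))) := by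
      linear_combination ((n:ℝ)^2)*pyt + pynt - 2*(n:ℝ)*hcmt
    nlinarith [step1, hident]
  have hfin : (2-a)*((n:ℝ)+1) ≤ ‖E‖ := by
    have h0 : 0 ≤ (2-a)*((n:ℝ)+1) := by nlinarith
    have := Complex.sq_norm E
    rw [Complex.normSq_apply] at this
    nlinarith [norm_nonneg E, hEsq]
  rw [habs] at hfin
  have hnpos : (0:ℝ) < (n:ℝ)+1 := by positivity
  nlinarith [hfin]

theorem mainassembly (n : ℕ) (hn : 4 ≤ n) (a : ℝ) (ha2 : a < 2) (ha1 : 1 < a)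
    (hb : (n:ℝ) ≤ (a - 1) * ((n:ℝ)+1) *
      (1 + ((n:ℝ)-1) * (1 - Real.cos (π / ((n:ℝ)-1))) / 2)) :
    ball (a : ℂ) (2 - a) ⊆ OmeganL n := by
  have hn0 : n ≠ 0 := by omega
  have hnC : ((n:ℂ)+1) ≠ 0 := Nat.cast_add_one_ne_zero n
  have hcont : Continuous (phinL n) := by
    unfold phinL; fun_prop
  -- strict derivative of phinL
  have hderiv : ∀ z : ℂ, HasStrictDerivAt (phinL n)
      ((n:ℂ)/((n:ℂ)+1) + (n:ℂ)*z^(n-1)/((n:ℂ)+1)) z := by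
    intro z
    have h1 : HasStrictDerivAt (fun z : ℂ => (n:ℂ)*z/((n:ℂ)+1)) ((n:ℂ)/((n:ℂ)+1)) z := by
      simpa using (((hasStrictDerivAt_id z).const_mul (n:ℂ)).div_const ((n:ℂ)+1))
    have h2 : HasStrictDerivAt (fun z : ℂ => z^n/((n:ℂ)+1)) ((n:ℂ)*z^(n-1)/((n:ℂ)+1)) z := by
      simpa using ((hasStrictDerivAt_pow n z).div_const ((n:ℂ)+1))
    exact (h1.const_add (1:ℂ)).add h2
  have hdne : ∀ z ∈ ball (0:ℂ) 1, ((n:ℂ)/((n:ℂ)+1) + (n:ℂ)*z^(n-1)/((n:ℂ)+1)) ≠ 0 := by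
    intro z hz h0
    have hnC0 : (n:ℂ) ≠ 0 := Nat.cast_ne_zero.mpr hn0
    have h1 : (n:ℂ) * (1 + z^(n-1)) = 0 := by
      have := mul_eq_zero_of_left h0 ((n:ℂ)+1)
      field_simp at this
      linear_combination this
    have h2 : (1:ℂ) + z^(n-1) = 0 := by
      rcases mul_eq_zero.mp h1 with h | h
      · exact absurd h hnC0
      · exact h
    have h3 : z^(n-1) = -1 := by linear_combination h2
    have h4 : ‖z^(n-1)‖ = 1 := by rw [h3]; simp
    rw [norm_pow] at h4
    have hz1 : ‖z‖ < 1 := by simpa [mem_ball, Complex.dist_eq] using hz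
    have hn1 : 1 ≤ n - 1 := by omega
    have : ‖z‖ ^ (n-1) < 1 :=
      pow_lt_one₀ (norm_nonneg z) hz1 (by omega)
    rw [h4] at this
    exact lt_irrefl 1 this
  -- Omega is a neighborhood of each of its points
  have hnhds : ∀ z ∈ ball (0:ℂ) 1, OmeganL n ∈ 𝓝 (phinL n z) := by
    intro z hz
    have hmap := (hderiv z).map_nhds_eq (hdne z hz)
    rw [← hmap]
    exact Filter.image_mem_map (isOpen_ball.mem_nhds hz)
  have hΩopen : IsOpen (OmeganL n) := by
    rw [isOpen_iff_mem_nhds]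
    rintro w ⟨z, hz, rfl⟩
    exact hnhds z hz
  -- a ∈ Omega via IVT
  have haΩ : (a:ℂ) ∈ OmeganL n := by
    set F : ℝ → ℝ := fun x => 1 + n*x/(n+1) + x^n/(n+1) with hF
    have hFc : ContinuousOn F (Icc 0 1) := by fun_prop
    have hF0 : F 0 = 1 := by simp [hF, zero_pow hn0]
    have hF1 : F 1 = 2 := by
      rw [hF]
      have : ((n:ℝ)+1) ≠ 0 := by positivity
      field_simp
      ring
    have hmem : a ∈ Ioo (F 0) (F 1) := by rw [hF0, hF1]; exact ⟨ha1, ha2⟩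
    obtain ⟨x₀, hx₀mem, hx₀⟩ := intermediate_value_Ioo (by norm_num : (0:ℝ) ≤ 1) hFc hmem
    refine ⟨(x₀:ℂ), ?_, ?_⟩
    · simp only [mem_ball, Complex.dist_eq, sub_zero]
      rw [Complex.norm_real, Real.norm_eq_abs]
      rw [_root_.abs_of_nonneg (le_of_lt hx₀mem.1)]
      exact hx₀mem.2
    · rw [show ((a:ℝ):ℂ) = ((F x₀ : ℝ):ℂ) by rw [hx₀]]
      unfold phinL
      rw [hF]
      push_cast
      ring
  -- closure of Omega inside image of closed ball
  have hcl : closure (OmeganL n) ⊆ phinL n '' closedBall 0 1 :=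
    closure_minimal (image_mono ball_subset_closedBall)
      (((isCompact_closedBall (0:ℂ) 1).image hcont).isClosed)
  -- frontier points are far from the ball
  have hbd := boundary n hn a ha2 ha1 hb
  have hfr : ∀ w ∈ frontier (OmeganL n), 2 - a ≤ dist w (a:ℂ) := by
    intro w hw
    have hwcl : w ∈ closure (OmeganL n) := hw.1
    obtain ⟨z, hz, rfl⟩ := hcl hwcl
    rcases lt_or_eq_of_le (mem_closedBall_iff_norm.mp hz) with h | h
    · exfalso
      have : phinL n z ∈ interior (OmeganL n) := by
        rw [mem_interior_iff_mem_nhds]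
        exact hnhds z (by simpa [mem_ball, Complex.dist_eq, sub_zero] using h)
      exact hw.2 this
    · have : ‖z‖ = 1 := by
        rw [← h]; simp [sub_zero]
      have := hbd z this
      rwa [Complex.dist_eq]
  -- connectivity argument
  have hpre : IsPreconnected (ball (a:ℂ) (2-a)) := (convex_ball (a:ℂ) (2-a)).isPreconnected
  have hsub : ball (a:ℂ) (2-a) ⊆ interior (OmeganL n) ∪ (closure (OmeganL n))ᶜ := by
    intro w hw
    by_cases hwc : w ∈ closure (OmeganL n)
    · left
      have hwf : w ∉ frontier (OmeganL n) := by
        intro hwf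
        have := hfr w hwf
        rw [mem_ball] at hw
        linarith
      rw [frontier, mem_diff] at hwf
      push_neg at hwf
      exact hwf hwc
    · right; exact hwc
  have hdisj : Disjoint (interior (OmeganL n)) ((closure (OmeganL n))ᶜ) := by
    refine Set.disjoint_left.mpr ?_
    intro w hw hwc
    exact hwc (subset_closure (interior_subset hw))
  have hne : ((ball (a:ℂ) (2-a)) ∩ interior (OmeganL n)).Nonempty := by
    refine ⟨(a:ℂ), ?_, ?_⟩
    · exact mem_ball_self (by linarith)
    · rw [hΩopen.interior_eq]; exact haΩ
  have := hpre.subset_left_of_subset_union isOpen_interior (isClosed_closure.isOpen_compl)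
    hdisj hsub hne
  exact this.trans interior_subset

theorem stmt1 (n : ℕ) (hn : 4 ≤ n) (hne : Even n) (a : ℝ)
    (ha1 : (-(1 + 4 * (n : ℝ) + (n : ℝ) ^ 2)
        + (n : ℝ) * ((n : ℝ) + 1) * Real.cos (Real.pi / ((n : ℝ) - 1))
        + ((n : ℝ) + 1) * Real.cos ((n : ℝ) * Real.pi / ((n : ℝ) - 1))) /
      ((n : ℝ) * ((n : ℝ) + 1) * Real.cos (Real.pi / ((n : ℝ) - 1))
        + ((n : ℝ) + 1) * Real.cos ((n : ℝ) * Real.pi / ((n : ℝ) - 1))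
        - ((n : ℝ) + 1) ^ 2) < a)
    (ha2 : a < 2) :
    ball (a : ℂ) (2 - a) ⊆ OmeganL n := by
  have hn1 : 1 ≤ n := by omega
  have hnR4 : (4:ℝ) ≤ (n:ℝ) := by exact_mod_cast hn
  have hc1 : Real.cos ((n:ℝ) * Real.pi / ((n:ℝ) - 1))
      = - Real.cos (Real.pi / ((n:ℝ) - 1)) := by
    have hne : (n:ℝ) - 1 ≠ 0 := by linarith
    have harg : (n:ℝ) * Real.pi / ((n:ℝ) - 1) = Real.pi + Real.pi / ((n:ℝ) - 1) := by
      field_simp; ring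
    rw [harg, Real.cos_add, Real.cos_pi, Real.sin_pi]; ring
  rw [hc1] at ha1
  have hcb1 : Real.cos (Real.pi / ((n:ℝ) - 1)) ≤ 1 := Real.cos_le_one _
  have hden : (n:ℝ) * ((n:ℝ) + 1) * Real.cos (Real.pi / ((n:ℝ) - 1))
      + ((n:ℝ) + 1) * (- Real.cos (Real.pi / ((n:ℝ) - 1))) - ((n:ℝ) + 1)^2 < 0 := by
    nlinarith [mul_nonneg (show (0:ℝ) ≤ (n:ℝ)^2 - 1 by nlinarith)
      (show (0:ℝ) ≤ 1 - Real.cos (Real.pi / ((n:ℝ) - 1)) by linarith)]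
  rw [div_lt_iff_of_neg hden] at ha1
  have hKpos : (0:ℝ) < 1 + ((n:ℝ)-1) * (1 - Real.cos (Real.pi / ((n:ℝ)-1))) / 2 := by
    nlinarith
  have hb : (n:ℝ) ≤ (a - 1) * ((n:ℝ)+1) *
      (1 + ((n:ℝ)-1) * (1 - Real.cos (Real.pi / ((n:ℝ)-1))) / 2) := by
    nlinarith [ha1]
  have ha1' : 1 < a := by
    by_contra hle
    push_neg at hle
    have h1 : 0 ≤ (1 - a) * (((n:ℝ)+1) *
        (1 + ((n:ℝ)-1) * (1 - Real.cos (Real.pi / ((n:ℝ)-1))) / 2)) :=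
      mul_nonneg (by linarith) (le_of_lt (mul_pos (by linarith) hKpos))
    nlinarith [hb]
  exact mainassembly n hn a ha2 ha1' hb
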